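/- For any finite collection p_1,...,p_k of persistence diagrams in D_n, there exist uncountably many distinct persistence diagrams a_t ∈ D_n ∩ [0,L]² (t ∈ ℝ) such that for each j the bottleneck distance d_B(a_t, p_j) is independent of t. In particular, no map of the form x ↦ (F_1(d_B(x,p_1)),...,F_k(d_B(x,p_k))) (for any functions F_j on [0,∞)) restricted to D_n ∩ [0,L]² is injective. -/

import Mathlib

open scoped BigOperators

/-- The space of persistence diagrams on one point: `T ∪ {Δ}`, where
`T = {(x₁,x₂) : x₂ > x₁ ≥ 0}` and `none` plays the role of the diagonal `Δ`. -/
abbrev D1 : Type := Option {p : ℝ × ℝ // 0 ≤ p.1 ∧ p.1 < p.2}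

/-- The bottleneck distance on `D1`. -/
noncomputable def dB : D1 → D1 → ℝ
  | none, none => 0
  | none, some p => (p.1.2 - p.1.1) / 2
  | some p, none => (p.1.2 - p.1.1) / 2
  | some p, some q =>
      min (max |p.1.1 - q.1.1| |p.1.2 - q.1.2|)
        (max ((p.1.2 - p.1.1) / 2) ((q.1.2 - q.1.1) / 2))

/-- max over coordinates. -/
noncomputable def dBmax {N : ℕ} (x y : Fin N → D1) : ℝ :=
  Finset.univ.fold max 0 (fun i => dB (x i) (y i))

/-- bottleneck distance on tuples, min over permutations. -/
noncomputable def dBn {N : ℕ} (x y : Fin N → D1) : ℝ :=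
  Finset.univ.inf' Finset.univ_nonempty
    (fun ψ : Equiv.Perm (Fin N) => dBmax x (y ∘ ψ))

def RGplus (R : ℝ) : Set D1 :=
  insert none {d : D1 | ∃ p, d = some p ∧ ∃ m k : ℕ,
    Odd m ∧ 1 ≤ m ∧ Even k ∧ 4 ≤ k ∧ m + 3 ≤ k ∧ p.1 = ((m : ℝ) * R, (k : ℝ) * R)}

def inBox (L : ℝ) : D1 → Prop
  | none => True
  | some p => p.1.1 ∈ Set.Icc 0 L ∧ p.1.2 ∈ Set.Icc 0 L

/-- value of `dB` from a small near-diagonal point to `d`, independent of position -/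
noncomputable def gval (ε : ℝ) : D1 → ℝ
  | none => ε
  | some q => max ε ((q.1.2 - q.1.1) / 2)

/-- left endpoint of the "bad interval" of positions for `d` -/
noncomputable def lval (ε : ℝ) : D1 → ℝ
  | none => 0
  | some q => q.1.2 - 2*ε - max ε ((q.1.2 - q.1.1) / 2)

lemma dB_pt (ε x : ℝ) (hε : 0 < ε) (hx : 0 ≤ x) (hx2 : x < x + 2*ε) (d : D1)
    (havoid : x ≤ lval ε d ∨ lval ε d + 4*ε ≤ x) :
    dB (some ⟨(x, x + 2*ε), ⟨hx, hx2⟩⟩) d = gval ε d := by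
  cases d with
  | none =>
      show (x + 2*ε - x) / 2 = ε
      ring
  | some q =>
      obtain ⟨⟨q1, q2⟩, hq1, hq2⟩ := q
      show min (max |x - q1| |x + 2*ε - q2|)
          (max ((x + 2*ε - x) / 2) ((q2 - q1) / 2)) = max ε ((q2 - q1) / 2)
      simp only at hq1 hq2
      set M : ℝ := max ε ((q2 - q1) / 2) with hM
      have hMε : ε ≤ M := le_max_left _ _
      have hMq : (q2 - q1) / 2 ≤ M := le_max_right _ _
      have h2M : M ≤ ε + (q2 - q1) / 2 := max_le (by linarith) (by linarith)
      have key : M ≤ max |x - q1| |x + 2*ε - q2| := by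
        rcases havoid with h | h
        · refine le_max_of_le_right ?_
          have hl : x ≤ q2 - 2*ε - M := h
          have h1 : M ≤ -(x + 2*ε - q2) := by linarith
          exact h1.trans (neg_le_abs _)
        · refine le_max_of_le_left ?_
          have hl : q2 - 2*ε - M + 4*ε ≤ x := h
          have h1 : M ≤ x - q1 := by linarith
          exact h1.trans (le_abs_self _)
      have hx2e : (x + 2*ε - x) / 2 = ε := by ring
      rw [hx2e]
      exact min_eq_right key

theorem not_injective_from_distances {N k : ℕ} (hN : 0 < N)
    (p : Fin k → (Fin N → D1)) (L : ℝ) (hL : 0 < L) :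
    (∃ a : ℝ → (Fin N → D1),
      (∀ s t : ℝ, (∃ ψ : Equiv.Perm (Fin N), a s = a t ∘ ψ) → s = t) ∧
      (∀ t i, inBox L (a t i)) ∧
      (∀ j : Fin k, ∀ s t : ℝ, dBn (a s) (p j) = dBn (a t) (p j))) ∧
    (∀ F : Fin k → ℝ → ℝ, ∃ x y : Fin N → D1,
      (∀ i, inBox L (x i)) ∧ (∀ i, inBox L (y i)) ∧
      (¬ ∃ ψ : Equiv.Perm (Fin N), x = y ∘ ψ) ∧
      ∀ j : Fin k, F j (dBn x (p j)) = F j (dBn y (p j))) := by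
  classical
  set P : ℕ := k * N with hP
  set ε : ℝ := L / (6 * P + 4) with hεdef
  have hεpos : 0 < ε := by positivity
  have hεL : ε * (6 * P + 4) = L := by
    rw [hεdef]; field_simp
  set lv : Fin k × Fin N → ℝ := fun w => lval ε (p w.1 w.2) with hlv
  set hf : Fin k × Fin N → ℕ := fun w => (⌊(lv w - ε) / (6 * ε)⌋ + 1).toNat with hhf
  -- pigeonhole: pick a candidate slot r not hit by any bad interval
  obtain ⟨r, hrmem, hrnot⟩ : ∃ r ∈ Finset.range (P + 1), r ∉ Finset.univ.image hf := by
    by_contra hcon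
    push_neg at hcon
    have hsub : Finset.range (P + 1) ⊆ Finset.univ.image hf := fun r hr => hcon r hr
    have hcard := Finset.card_le_card hsub
    have h1 : (Finset.univ.image hf).card ≤ P := by
      calc (Finset.univ.image hf).card
          ≤ (Finset.univ : Finset (Fin k × Fin N)).card := Finset.card_image_le
        _ = P := by simp [hP, Nat.mul_comm]
    rw [Finset.card_range] at hcard
    omega
  have hrP : (r : ℝ) ≤ (P : ℝ) := by
    have : r ≤ P := by
      have := Finset.mem_range.mp hrmem; omega
    exact_mod_cast this
  -- the chosen slot avoids all bad intervals
  have havoid : ∀ w : Fin k × Fin N, ∀ x : ℝ, 6*ε*r < x → x < 6*ε*r + ε →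
      x ≤ lv w ∨ lv w + 4*ε ≤ x := by
    intro w x hx1 hx2
    by_contra hcon
    push_neg at hcon
    obtain ⟨h1, h2⟩ := hcon
    -- so 6εr ∈ (lv w - ε, lv w + 4ε)
    have hc1 : (lv w - ε) / (6 * ε) < (r : ℝ) := by
      rw [div_lt_iff₀ (by positivity)]
      nlinarith
    have hc2 : (r : ℝ) < (lv w - ε) / (6 * ε) + 5/6 := by
      rw [show (lv w - ε) / (6 * ε) + 5/6 = (lv w - ε + 5 * ε) / (6 * ε) by
        field_simp]
      rw [lt_div_iff₀ (by positivity)]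
      nlinarith
    set c : ℝ := (lv w - ε) / (6 * ε) with hc
    have hZ1 : ⌊c⌋ < (r : ℤ) := Int.floor_lt.mpr (by exact_mod_cast hc1)
    have hZ2 : (r : ℤ) < ⌊c⌋ + 2 := by
      have hfl := Int.lt_floor_add_one c
      have : (r : ℝ) < (⌊c⌋ : ℝ) + 2 := by linarith
      exact_mod_cast this
    have hreq : (r : ℤ) = ⌊c⌋ + 1 := by omega
    have hfw : hf w = r := by
      rw [hhf]
      simp only
      rw [← hc, ← hreq]
      simp
    exact hrnot (Finset.mem_image.mpr ⟨w, Finset.mem_univ w, hfw⟩)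
  -- the parameter map
  set σ : ℝ → ℝ := fun t => (Real.arctan t + Real.pi) / (2 * Real.pi) with hσ
  have hπ : 0 < Real.pi := Real.pi_pos
  have hσmem : ∀ t, 0 < σ t ∧ σ t < 1 := by
    intro t
    have h1 := Real.arctan_lt_pi_div_two t
    have h2 := Real.neg_pi_div_two_lt_arctan t
    constructor
    · exact div_pos (by linarith) (by linarith)
    · rw [hσ]; simp only
      rw [div_lt_one (by linarith)]; linarith
  have hσinj : Function.Injective σ := by
    intro s t h
    have h2π : (2 * Real.pi) ≠ 0 := by positivity
    rw [hσ] at h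
    simp only [div_eq_div_iff h2π h2π] at h
    have : Real.arctan s = Real.arctan t := by nlinarith
    exact Real.arctan_injective this
  set xf : ℝ → ℝ := fun t => 6*ε*r + ε * σ t with hxf
  have hxf1 : ∀ t, 6*ε*r < xf t := by
    intro t
    have := (hσmem t).1
    rw [hxf]; simp only
    nlinarith
  have hxf2 : ∀ t, xf t < 6*ε*r + ε := by
    intro t
    have := (hσmem t).2
    rw [hxf]; simp only
    nlinarith
  have hxf0 : ∀ t, 0 ≤ xf t := by
    intro t
    have := hxf1 t
    have hr0 : (0:ℝ) ≤ (r:ℝ) := Nat.cast_nonneg r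
    nlinarith
  have hxfL : ∀ t, xf t + 2*ε ≤ L := by
    intro t
    have h1 := hxf2 t
    have h2 : 6*ε*r + ε ≤ 6*ε*P + ε := by nlinarith
    nlinarith
  have hxflt : ∀ t, xf t < xf t + 2*ε := fun t => by linarith
  have hxfinj : Function.Injective xf := by
    intro s t h
    rw [hxf] at h
    simp only at h
    have : σ s = σ t := by
      have hε' : ε ≠ 0 := ne_of_gt hεpos
      field_simp at h
      linarith
    exact hσinj this
  -- the family
  set a : ℝ → Fin N → D1 := fun t _ =>
    some ⟨(xf t, xf t + 2*ε), ⟨hxf0 t, hxflt t⟩⟩ with ha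
  -- the key pointwise distance formula
  have hdB : ∀ t (j : Fin k) (i : Fin N) (m : Fin N),
      dB (a t m) (p j i) = gval ε (p j i) := by
    intro t j i m
    rw [ha]
    simp only
    exact dB_pt ε (xf t) hεpos (hxf0 t) (hxflt t) (p j i)
      (havoid (j, i) (xf t) (hxf1 t) (hxf2 t))
  have hdBn : ∀ (j : Fin k) (t : ℝ),
      dBn (a t) (p j) = Finset.univ.inf' Finset.univ_nonempty
        (fun ψ : Equiv.Perm (Fin N) =>
          Finset.univ.fold max 0 (fun i => gval ε (p j (ψ i)))) := by
    intro j t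
    unfold dBn dBmax
    refine Finset.inf'_congr _ rfl ?_
    intro ψ _
    refine Finset.fold_congr ?_
    intro i _
    simp only [Function.comp]
    exact hdB t j (ψ i) i
  have part1 : (∃ a : ℝ → (Fin N → D1),
      (∀ s t : ℝ, (∃ ψ : Equiv.Perm (Fin N), a s = a t ∘ ψ) → s = t) ∧
      (∀ t i, inBox L (a t i)) ∧
      (∀ j : Fin k, ∀ s t : ℝ, dBn (a s) (p j) = dBn (a t) (p j))) := by
    refine ⟨a, ?_, ?_, ?_⟩
    · rintro s t ⟨ψ, hψ⟩
      have h0 := congrFun hψ ⟨0, hN⟩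
      rw [ha] at h0
      simp only [Function.comp] at h0
      have hx : xf s = xf t := by
        have := Option.some.inj h0
        exact congrArg (fun z => z.1.1) this
      exact hxfinj hx
    · intro t i
      rw [ha]
      show xf t ∈ Set.Icc 0 L ∧ xf t + 2*ε ∈ Set.Icc 0 L
      have h1 := hxf0 t
      have h2 := hxfL t
      constructor
      · exact ⟨h1, by linarith⟩
      · exact ⟨by linarith, h2⟩
    · intro j s t
      rw [hdBn j s, hdBn j t]
  refine ⟨part1, ?_⟩
  intro F
  obtain ⟨b, hbinj, hbbox, hbdist⟩ := part1
  refine ⟨b 0, b 1, hbbox 0, hbbox 1, ?_, ?_⟩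
  · intro hcon
    have : (0:ℝ) = 1 := hbinj 0 1 hcon
    norm_num at this
  · intro j
    rw [hbdist j 0 1]
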